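/- Let p, q, r be subspaces of ℂ² (i.e., of EuclideanSpace ℂ (Fin 2)). If α(p,q,r) ≠ ⊥, then p, q, r are pairwise distinct one-dimensional subspaces (i.e., dim p = dim q = dim r = 1 and p ≠ q, p ≠ r, q ≠ r). -/

import Mathlib

/-- The distributivity test formula `α(p,q,r) = (a ⊔ b) ⊓ (aᗮ ⊔ bᗮ)` where
`a = p ⊔ (q ⊓ r)` and `b = (p ⊔ q) ⊓ (p ⊔ r)`. -/
noncomputable def distribTest {E : Type*} [NormedAddCommGroup E] [InnerProductSpace ℂ E]
    (p q r : Submodule ℂ E) : Submodule ℂ E :=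
  ((p ⊔ (q ⊓ r)) ⊔ ((p ⊔ q) ⊓ (p ⊔ r))) ⊓ ((p ⊔ (q ⊓ r))ᗮ ⊔ ((p ⊔ q) ⊓ (p ⊔ r))ᗮ)

theorem distribTest_ne_bot_imp_distinct_lines
    (p q r : Submodule ℂ (EuclideanSpace ℂ (Fin 2)))
    (h : distribTest p q r ≠ ⊥) :
    Module.finrank ℂ p = 1 ∧ Module.finrank ℂ q = 1 ∧ Module.finrank ℂ r = 1 ∧
      p ≠ q ∧ p ≠ r ∧ q ≠ r := by
  have hab : p ⊔ (q ⊓ r) ≠ (p ⊔ q) ⊓ (p ⊔ r) := by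
    intro heq
    apply h
    unfold distribTest
    rw [heq, sup_idem, sup_idem, Submodule.inf_orthogonal_eq_bot]
  refine ⟨?_, ?_, ?_, ?_, ?_, ?_⟩
  · have h0 : p ≠ ⊥ := by rintro rfl; exact hab (by simp)
    have ht : p ≠ ⊤ := by rintro rfl; exact hab (by simp)
    have h1 : Module.finrank ℂ p ≠ 0 := by
      simpa [Submodule.finrank_eq_zero] using h0
    have h2 : Module.finrank ℂ p < 2 := by
      have := Submodule.finrank_lt (K := ℂ) (V := EuclideanSpace ℂ (Fin 2)) ht
      simpa using this
    omega
  · have h0 : q ≠ ⊥ := by rintro rfl; exact hab (by simp)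
    have ht : q ≠ ⊤ := by rintro rfl; exact hab (by simp)
    have h1 : Module.finrank ℂ q ≠ 0 := by
      simpa [Submodule.finrank_eq_zero] using h0
    have h2 : Module.finrank ℂ q < 2 := by
      have := Submodule.finrank_lt (K := ℂ) (V := EuclideanSpace ℂ (Fin 2)) ht
      simpa using this
    omega
  · have h0 : r ≠ ⊥ := by rintro rfl; exact hab (by simp)
    have ht : r ≠ ⊤ := by rintro rfl; exact hab (by simp)
    have h1 : Module.finrank ℂ r ≠ 0 := by
      simpa [Submodule.finrank_eq_zero] using h0
    have h2 : Module.finrank ℂ r < 2 := by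
      have := Submodule.finrank_lt (K := ℂ) (V := EuclideanSpace ℂ (Fin 2)) ht
      simpa using this
    omega
  · rintro rfl
    exact hab (by simp [sup_inf_self, inf_sup_self, inf_comm, sup_comm])
  · rintro rfl
    exact hab (by simp [sup_inf_self, inf_sup_self, inf_comm, sup_comm])
  · rintro rfl
    exact hab (by simp)
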